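/- Let f_sin(x) = e^{x²/2} ∫_{-∞}^x sin(y) e^{-y²/2} dy be the Stein solution associated with the sine function (note that ∫ sin dγ = 0 by symmetry of the standard Gaussian measure γ). Then f_sin is three times differentiable on ℝ, and its second and third derivatives satisfy |f_sin''(x)| ≤ 2 and |f_sin'''(x)| ≤ 2 for all x ∈ ℝ. -/

import Mathlib

open MeasureTheory ProbabilityTheory Real

/-- The Stein solution associated with the sine function:
`f_sin(x) = e^{x²/2} ∫_{-∞}^x sin(y) e^{-y²/2} dy`. -/
noncomputable def steinSolSin : ℝ → ℝ := fun x =>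
  Real.exp (x ^ 2 / 2) * ∫ y in Set.Iic x, Real.sin y * Real.exp (-(y ^ 2) / 2)

open intervalIntegral in
noncomputable def gg : ℝ → ℝ := fun x => ∫ t in (0:ℝ)..1, Real.cos (t*x) * Real.exp ((t^2-1)/2)

lemma cont1 (x : ℝ) : Continuous (fun t : ℝ => Real.cos (t*x) * Real.exp ((t^2-1)/2)) := by
  fun_prop

lemma Ebound {t : ℝ} (ht : t ∈ Set.uIoc (0:ℝ) 1) : Real.exp ((t^2-1)/2) ≤ 1 ∧ |t| ≤ 1 := by
  rw [Set.uIoc_of_le (by norm_num)] at ht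
  obtain ⟨h0, h1⟩ := ht
  constructor
  · rw [Real.exp_le_one_iff]; nlinarith
  · rw [abs_of_pos h0]; exact h1

lemma gg_deriv (x : ℝ) :
    HasDerivAt gg (∫ t in (0:ℝ)..1, -(t * Real.sin (t*x)) * Real.exp ((t^2-1)/2)) x := by
  have := intervalIntegral.hasDerivAt_integral_of_dominated_loc_of_deriv_le
    (F := fun x t => Real.cos (t*x) * Real.exp ((t^2-1)/2))
    (F' := fun x t => -(t * Real.sin (t*x)) * Real.exp ((t^2-1)/2))
    (x₀ := x) (a := 0) (b := 1) (μ := volume) (bound := fun _ => 1)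
    (Filter.univ_mem : Set.univ ∈ nhds x)
    (Filter.Eventually.of_forall fun y => (cont1 y).aestronglyMeasurable.restrict)
    ((cont1 x).intervalIntegrable 0 1)
    (Continuous.aestronglyMeasurable (by fun_prop)).restrict
    (Filter.Eventually.of_forall fun t ht y _ => by
      have he := Ebound ht
      show ‖-(t * Real.sin (t*y)) * Real.exp ((t^2-1)/2)‖ ≤ 1
      rw [Real.norm_eq_abs, abs_mul, abs_neg, abs_mul, abs_of_pos (Real.exp_pos _)]
      have hs := abs_sin_le_one (t*y)
      have h4 : |t| * |Real.sin (t*y)| ≤ 1 := by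
        nlinarith [abs_nonneg t, abs_nonneg (Real.sin (t*y)), he.2]
      nlinarith [Real.exp_pos ((t^2-1)/2), he.1, mul_nonneg (abs_nonneg t) (abs_nonneg (Real.sin (t*y)))])
    (intervalIntegrable_const)
    (Filter.Eventually.of_forall fun t _ y _ => by
      have h1 : HasDerivAt (fun z : ℝ => t*z) t y := by
        simpa using (hasDerivAt_id y).const_mul t
      have h2 := (Real.hasDerivAt_cos (t*y)).comp y h1
      have h3 := h2.mul_const (Real.exp ((t^2-1)/2))
      refine h3.congr_deriv ?_; ring)
  exact this.2

lemma hE_deriv (t : ℝ) : HasDerivAt (fun t : ℝ => Real.exp ((t^2-1)/2)) (t * Real.exp ((t^2-1)/2)) t := by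
  have h3 : HasDerivAt (fun t : ℝ => (t^2-1)/2) t t := by
    have := ((hasDerivAt_pow 2 t).sub_const 1).div_const 2
    simpa using this
  have := (Real.hasDerivAt_exp ((t^2-1)/2)).comp t h3
  simpa [mul_comm, Function.comp_def] using this

lemma htx_deriv (x t : ℝ) : HasDerivAt (fun t : ℝ => t*x) x t := by
  simpa using (hasDerivAt_id t).mul_const x

lemma lemma1 (x : ℝ) :
    ∫ t in (0:ℝ)..1, (x * Real.cos (t*x) + t * Real.sin (t*x)) * Real.exp ((t^2-1)/2) = Real.sin x := by
  have h : ∀ t ∈ Set.uIcc (0:ℝ) 1, HasDerivAt (fun t : ℝ => Real.sin (t*x) * Real.exp ((t^2-1)/2))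
      ((x * Real.cos (t*x) + t * Real.sin (t*x)) * Real.exp ((t^2-1)/2)) t := by
    intro t _
    have h2 := (Real.hasDerivAt_sin (t*x)).comp t (htx_deriv x t)
    have := h2.fun_mul (hE_deriv t)
    refine this.congr_deriv ?_
    simp only [Function.comp_apply]; ring
  have := intervalIntegral.integral_eq_sub_of_hasDerivAt h
    ((by fun_prop : Continuous fun t : ℝ => (x * Real.cos (t*x) + t * Real.sin (t*x)) * Real.exp ((t^2-1)/2)).intervalIntegrable 0 1)
  simpa using this

lemma lemma2 (x : ℝ) :
    ∫ t in (0:ℝ)..1, (1 + x^2 + t^2) * Real.cos (t*x) * Real.exp ((t^2-1)/2)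
      = x * Real.sin x + Real.cos x := by
  have h : ∀ t ∈ Set.uIcc (0:ℝ) 1, HasDerivAt
      (fun t : ℝ => (x * Real.sin (t*x) + t * Real.cos (t*x)) * Real.exp ((t^2-1)/2))
      ((1 + x^2 + t^2) * Real.cos (t*x) * Real.exp ((t^2-1)/2)) t := by
    intro t _
    have hs := (Real.hasDerivAt_sin (t*x)).comp t (htx_deriv x t)
    have hc := (Real.hasDerivAt_cos (t*x)).comp t (htx_deriv x t)
    have h1 := ((hs.const_mul x).fun_add ((hasDerivAt_id t).fun_mul hc)).fun_mul (hE_deriv t)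
    refine h1.congr_deriv ?_
    simp only [Function.comp_apply, id_eq]; ring
  have := intervalIntegral.integral_eq_sub_of_hasDerivAt h
    ((by fun_prop : Continuous fun t : ℝ => (1 + x^2 + t^2) * Real.cos (t*x) * Real.exp ((t^2-1)/2)).intervalIntegrable 0 1)
  simpa using this

lemma lemma3 (x : ℝ) :
    ∫ t in (0:ℝ)..1, ((x^3 + 3*x) * Real.cos (t*x) - t^3 * Real.sin (t*x)) * Real.exp ((t^2-1)/2)
      = (1 + x^2) * Real.sin x + x * Real.cos x := by
  have h : ∀ t ∈ Set.uIcc (0:ℝ) 1, HasDerivAt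
      (fun t : ℝ => ((x^2 + 2 - t^2) * Real.sin (t*x) + x * t * Real.cos (t*x)) * Real.exp ((t^2-1)/2))
      (((x^3 + 3*x) * Real.cos (t*x) - t^3 * Real.sin (t*x)) * Real.exp ((t^2-1)/2)) t := by
    intro t _
    have hs := (Real.hasDerivAt_sin (t*x)).comp t (htx_deriv x t)
    have hc := (Real.hasDerivAt_cos (t*x)).comp t (htx_deriv x t)
    have hp : HasDerivAt (fun t : ℝ => x^2 + 2 - t^2) (-(2*t)) t := by
      simpa using (hasDerivAt_pow 2 t).const_sub (x^2+2)
    have h1 := ((hp.fun_mul hs).fun_add (((hasDerivAt_id t).const_mul x).fun_mul hc)).fun_mul (hE_deriv t)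
    refine h1.congr_deriv ?_
    simp only [Function.comp_apply, id_eq]; ring
  have := intervalIntegral.integral_eq_sub_of_hasDerivAt h
    ((by fun_prop : Continuous fun t : ℝ => ((x^3 + 3*x) * Real.cos (t*x) - t^3 * Real.sin (t*x)) * Real.exp ((t^2-1)/2)).intervalIntegrable 0 1)
  rw [this]; simp; exact Or.inl (by ring)

noncomputable def FF : ℝ → ℝ := fun x => ∫ y in Set.Iic x, Real.sin y * Real.exp (-(y^2)/2)

lemma phi_integrable : Integrable (fun y : ℝ => Real.sin y * Real.exp (-(y^2)/2)) := by
  have h := integrable_exp_neg_mul_sq (by norm_num : (0:ℝ) < 1/2)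
  apply h.mono' ((by fun_prop : Continuous fun y : ℝ => Real.sin y * Real.exp (-(y^2)/2)).aestronglyMeasurable)
  filter_upwards with y
  rw [Real.norm_eq_abs, abs_mul, abs_of_pos (Real.exp_pos _)]
  have h1 := abs_sin_le_one y
  have h2 : -(y^2)/2 = -(1/2) * y^2 := by ring
  rw [h2]
  nlinarith [Real.exp_pos (-(1/2) * y^2), abs_nonneg (Real.sin y)]

lemma FF_deriv (x : ℝ) : HasDerivAt FF (Real.sin x * Real.exp (-(x^2)/2)) x := by
  have hFF : FF = fun u => (∫ y in (0:ℝ)..u, Real.sin y * Real.exp (-(y^2)/2)) + FF 0 := by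
    funext u
    have := intervalIntegral.integral_Iic_sub_Iic (phi_integrable.integrableOn) (phi_integrable.integrableOn)
      (a := 0) (b := u) (μ := volume)
    simp only [FF]; linarith [this]
  rw [hFF]
  apply HasDerivAt.add_const
  exact intervalIntegral.integral_hasDerivAt_right
    (phi_integrable.intervalIntegrable)
    ((by fun_prop : Continuous fun y : ℝ => Real.sin y * Real.exp (-(y^2)/2)).stronglyMeasurable.stronglyMeasurableAtFilter)
    (by fun_prop)

lemma gg_bound (x : ℝ) : |gg x| ≤ 1 := by
  have := intervalIntegral.norm_integral_le_of_norm_le_const (C := 1)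
    (f := fun t : ℝ => Real.cos (t*x) * Real.exp ((t^2-1)/2)) (a := 0) (b := 1)
    (fun t ht => by
      have he := Ebound ht
      rw [Real.norm_eq_abs, abs_mul, abs_of_pos (Real.exp_pos _)]
      have h1 := abs_cos_le_one (t*x)
      nlinarith [Real.exp_pos ((t^2-1)/2), abs_nonneg (Real.cos (t*x))])
  simpa [gg] using this

lemma gg_deriv' (x : ℝ) : HasDerivAt gg (x * gg x - Real.sin x) x := by
  have h := gg_deriv x
  have hsplit : ∫ t in (0:ℝ)..1, -(t * Real.sin (t*x)) * Real.exp ((t^2-1)/2)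
      = x * gg x - Real.sin x := by
    have hc : Continuous fun t : ℝ => x * Real.cos (t*x) * Real.exp ((t^2-1)/2) := by fun_prop
    have hs : Continuous fun t : ℝ => t * Real.sin (t*x) * Real.exp ((t^2-1)/2) := by fun_prop
    have hadd : ∫ t in (0:ℝ)..1, (x * Real.cos (t*x) + t * Real.sin (t*x)) * Real.exp ((t^2-1)/2)
        = (∫ t in (0:ℝ)..1, x * Real.cos (t*x) * Real.exp ((t^2-1)/2))
          + ∫ t in (0:ℝ)..1, t * Real.sin (t*x) * Real.exp ((t^2-1)/2) := by
      rw [← intervalIntegral.integral_add (hc.intervalIntegrable 0 1) (hs.intervalIntegrable 0 1)]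
      congr 1; funext t; ring
    have hx : ∫ t in (0:ℝ)..1, x * Real.cos (t*x) * Real.exp ((t^2-1)/2) = x * gg x := by
      rw [show gg x = ∫ t in (0:ℝ)..1, Real.cos (t*x) * Real.exp ((t^2-1)/2) from rfl,
        ← intervalIntegral.integral_const_mul]
      congr 1; funext t; ring
    have hL := lemma1 x
    rw [hadd, hx] at hL
    have : ∫ t in (0:ℝ)..1, -(t * Real.sin (t*x)) * Real.exp ((t^2-1)/2)
        = - ∫ t in (0:ℝ)..1, t * Real.sin (t*x) * Real.exp ((t^2-1)/2) := by
      rw [← intervalIntegral.integral_neg]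
      congr 1; funext t; ring
    rw [this]; linarith
  rwa [hsplit] at h

lemma expsq_deriv (x : ℝ) : HasDerivAt (fun x : ℝ => Real.exp (-(x^2)/2)) (-x * Real.exp (-(x^2)/2)) x := by
  have h3 : HasDerivAt (fun x : ℝ => -(x^2)/2) (-x) x := by
    have := ((hasDerivAt_pow 2 x).fun_neg).div_const 2
    refine this.congr_deriv ?_
    push_cast; ring
  have := (Real.hasDerivAt_exp (-(x^2)/2)).comp x h3
  refine this.congr_deriv ?_
  ring

lemma key : ∀ x : ℝ, FF x = - (Real.exp (-(x^2)/2) * gg x) := by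
  set D : ℝ → ℝ := fun x => FF x + Real.exp (-(x^2)/2) * gg x with hD
  have hDderiv : ∀ x, HasDerivAt D 0 x := by
    intro x
    have h1 := FF_deriv x
    have h2 := (expsq_deriv x).fun_mul (gg_deriv' x)
    have h3 := h1.fun_add h2
    refine h3.congr_deriv ?_; ring
  have hconst : ∀ x, D x = D 0 := by
    intro x
    have hdiff : Differentiable ℝ D := fun y => (hDderiv y).differentiableAt
    exact is_const_of_deriv_eq_zero hdiff (fun y => (hDderiv y).deriv) x 0
  have hlim : Filter.Tendsto D Filter.atBot (nhds 0) := by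
    have hF : Filter.Tendsto FF Filter.atBot (nhds 0) := by
      have : ∀ x, FF x = ∫ y, Set.indicator (Set.Iic x) (fun y => Real.sin y * Real.exp (-(y^2)/2)) y := by
        intro x
        rw [MeasureTheory.integral_indicator measurableSet_Iic]
        rfl
      rw [show (0:ℝ) = ∫ y : ℝ, (0:ℝ) by simp]
      apply Filter.Tendsto.congr (fun x => (this x).symm)
      apply MeasureTheory.tendsto_integral_filter_of_dominated_convergence
        (fun y => |Real.sin y * Real.exp (-(y^2)/2)|)
      · filter_upwards with x
        exact ((by fun_prop : Continuous fun y : ℝ => Real.sin y * Real.exp (-(y^2)/2)).aestronglyMeasurable).indicator measurableSet_Iic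
      · filter_upwards with x
        filter_upwards with y
        calc ‖Set.indicator (Set.Iic x) (fun y => Real.sin y * Real.exp (-(y^2)/2)) y‖
            ≤ ‖Real.sin y * Real.exp (-(y^2)/2)‖ := norm_indicator_le_norm_self _ _
          _ = |Real.sin y * Real.exp (-(y^2)/2)| := Real.norm_eq_abs _
      · exact phi_integrable.abs
      · filter_upwards with y
        apply Filter.Tendsto.congr' (f₁ := fun _ => (0:ℝ))
        · filter_upwards [Filter.eventually_lt_atBot y] with x hx
          exact (Set.indicator_of_notMem (by simpa using not_le.2 hx) _).symm
        · exact tendsto_const_nhds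
    have hG : Filter.Tendsto (fun x => Real.exp (-(x^2)/2) * gg x) Filter.atBot (nhds 0) := by
      apply squeeze_zero_norm (a := fun x : ℝ => Real.exp (-(x^2)/2))
      · intro x
        rw [Real.norm_eq_abs, abs_mul, abs_of_pos (Real.exp_pos _)]
        nlinarith [gg_bound x, Real.exp_pos (-(x^2)/2), abs_nonneg (gg x)]
      · have h1 : Filter.Tendsto (fun x : ℝ => -(x^2)/2) Filter.atBot Filter.atBot := by
          apply Filter.tendsto_atBot_mono' Filter.atBot _ Filter.tendsto_id
          filter_upwards [Filter.eventually_le_atBot (-2:ℝ)] with x hx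
          show -(x^2)/2 ≤ x
          nlinarith
        exact Real.tendsto_exp_atBot.comp h1
    simpa using hF.add hG
  have hD0 : D 0 = 0 := by
    have := hlim.congr' (Filter.EventuallyEq.of_eq (funext hconst))
    exact tendsto_nhds_unique tendsto_const_nhds this
  intro x
  have := hconst x
  rw [hD0] at this
  simp only [D] at this
  linarith


lemma stein_eq (x : ℝ) : steinSolSin x = - gg x := by
  have hk := key x
  have hFFeq : (∫ y in Set.Iic x, Real.sin y * Real.exp (-(y ^ 2) / 2)) = FF x := by
    simp only [FF]
  rw [steinSolSin, hFFeq, hk]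
  rw [show Real.exp (x^2/2) * -(Real.exp (-(x^2)/2) * gg x)
      = -((Real.exp (x^2/2) * Real.exp (-(x^2)/2)) * gg x) by ring,
    ← Real.exp_add, show x^2/2 + -(x^2)/2 = 0 by ring, Real.exp_zero, one_mul]

lemma stein_funeq : steinSolSin = fun x => - gg x := funext stein_eq

lemma stein_hasDeriv (x : ℝ) :
    HasDerivAt steinSolSin (x * steinSolSin x + Real.sin x) x := by
  have h := (gg_deriv' x).fun_neg
  have hfun : (fun x => - gg x) = steinSolSin := stein_funeq.symm
  rw [hfun] at h
  refine h.congr_deriv ?_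
  rw [stein_eq x]
  ring

lemma stein_deriv1 : deriv steinSolSin = fun x => x * steinSolSin x + Real.sin x :=
  funext fun x => (stein_hasDeriv x).deriv

lemma stein_hasDeriv2 (x : ℝ) :
    HasDerivAt (deriv steinSolSin)
      ((1+x^2) * steinSolSin x + x * Real.sin x + Real.cos x) x := by
  rw [stein_deriv1]
  have h1 : HasDerivAt (fun x : ℝ => x * steinSolSin x) (steinSolSin x + x * (x * steinSolSin x + Real.sin x)) x := by
    simpa using (hasDerivAt_id x).fun_mul (stein_hasDeriv x)
  have := h1.fun_add (Real.hasDerivAt_sin x)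
  refine this.congr_deriv ?_
  ring

lemma stein_deriv2 : deriv (deriv steinSolSin)
    = fun x => (1+x^2) * steinSolSin x + x * Real.sin x + Real.cos x :=
  funext fun x => (stein_hasDeriv2 x).deriv

lemma stein_hasDeriv3 (x : ℝ) :
    HasDerivAt (deriv (deriv steinSolSin))
      ((x^3+3*x) * steinSolSin x + (1+x^2) * Real.sin x + x * Real.cos x) x := by
  rw [stein_deriv2]
  have h1 : HasDerivAt (fun x : ℝ => 1 + x^2) (2*x) x := by
    simpa using (hasDerivAt_pow 2 x).const_add 1
  have h2 : HasDerivAt (fun x : ℝ => x * Real.sin x) (Real.sin x + x * Real.cos x) x := by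
    simpa using (hasDerivAt_id x).fun_mul (Real.hasDerivAt_sin x)
  have := ((h1.fun_mul (stein_hasDeriv x)).fun_add h2).fun_add (Real.hasDerivAt_cos x)
  refine this.congr_deriv ?_
  ring

lemma stein_deriv3 : deriv (deriv (deriv steinSolSin))
    = fun x => (x^3+3*x) * steinSolSin x + (1+x^2) * Real.sin x + x * Real.cos x :=
  funext fun x => (stein_hasDeriv3 x).deriv

lemma int_bound_one {h : ℝ → ℝ} (hb : ∀ t ∈ Set.uIoc (0:ℝ) 1, |h t| ≤ 1) :
    |∫ t in (0:ℝ)..1, h t| ≤ 1 := by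
  have := intervalIntegral.norm_integral_le_of_norm_le_const (C := 1) (a := (0:ℝ)) (b := 1)
    (f := h) (fun t ht => by rw [Real.norm_eq_abs]; exact hb t ht)
  simpa using this

lemma bound2 (x : ℝ) : |(1+x^2) * steinSolSin x + x * Real.sin x + Real.cos x| ≤ 2 := by
  have hg : steinSolSin x = - gg x := stein_eq x
  have hcont1 : Continuous fun t : ℝ => (1+x^2) * (Real.cos (t*x) * Real.exp ((t^2-1)/2)) := by fun_prop
  have hcont2 : Continuous fun t : ℝ => t^2 * Real.cos (t*x) * Real.exp ((t^2-1)/2) := by fun_prop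
  have hsplit : (1+x^2) * gg x
      + (∫ t in (0:ℝ)..1, t^2 * Real.cos (t*x) * Real.exp ((t^2-1)/2))
      = x * Real.sin x + Real.cos x := by
    rw [show (1+x^2) * gg x = ∫ t in (0:ℝ)..1, (1+x^2) * (Real.cos (t*x) * Real.exp ((t^2-1)/2))
        from (intervalIntegral.integral_const_mul _ _).symm,
      ← intervalIntegral.integral_add (hcont1.intervalIntegrable 0 1) (hcont2.intervalIntegrable 0 1)]
    rw [← lemma2 x]
    congr 1; funext t; ring
  have hval : (1+x^2) * steinSolSin x + x * Real.sin x + Real.cos x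
      = ∫ t in (0:ℝ)..1, t^2 * Real.cos (t*x) * Real.exp ((t^2-1)/2) := by
    rw [hg]; linarith
  rw [hval]
  have := int_bound_one (h := fun t => t^2 * Real.cos (t*x) * Real.exp ((t^2-1)/2))
    (fun t ht => by
      have he := Ebound ht
      have hc := abs_cos_le_one (t*x)
      rw [abs_mul, abs_mul, abs_of_pos (Real.exp_pos _)]
      have ht2 : |t^2| ≤ 1 := by
        rw [abs_of_nonneg (sq_nonneg t), ← sq_abs t]
        nlinarith [he.2, abs_nonneg t]
      have hA : |t^2| * |Real.cos (t*x)| ≤ 1 := by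
        nlinarith [abs_nonneg (t^2), abs_nonneg (Real.cos (t*x))]
      nlinarith [Real.exp_pos ((t^2-1)/2), he.1,
        mul_nonneg (abs_nonneg (t^2)) (abs_nonneg (Real.cos (t*x)))])
  linarith [this]

lemma bound3 (x : ℝ) : |(x^3+3*x) * steinSolSin x + (1+x^2) * Real.sin x + x * Real.cos x| ≤ 2 := by
  have hg : steinSolSin x = - gg x := stein_eq x
  have hcont1 : Continuous fun t : ℝ => (x^3+3*x) * (Real.cos (t*x) * Real.exp ((t^2-1)/2)) := by fun_prop
  have hcont2 : Continuous fun t : ℝ => -(t^3 * Real.sin (t*x)) * Real.exp ((t^2-1)/2) := by fun_prop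
  have hsplit : (x^3+3*x) * gg x
      + (∫ t in (0:ℝ)..1, -(t^3 * Real.sin (t*x)) * Real.exp ((t^2-1)/2))
      = (1+x^2) * Real.sin x + x * Real.cos x := by
    rw [show (x^3+3*x) * gg x = ∫ t in (0:ℝ)..1, (x^3+3*x) * (Real.cos (t*x) * Real.exp ((t^2-1)/2))
        from (intervalIntegral.integral_const_mul _ _).symm,
      ← intervalIntegral.integral_add (hcont1.intervalIntegrable 0 1) (hcont2.intervalIntegrable 0 1)]
    rw [← lemma3 x]
    congr 1; funext t; ring
  have hval : (x^3+3*x) * steinSolSin x + (1+x^2) * Real.sin x + x * Real.cos x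
      = ∫ t in (0:ℝ)..1, -(t^3 * Real.sin (t*x)) * Real.exp ((t^2-1)/2) := by
    rw [hg]; linarith
  rw [hval]
  have := int_bound_one (h := fun t => -(t^3 * Real.sin (t*x)) * Real.exp ((t^2-1)/2))
    (fun t ht => by
      have he := Ebound ht
      have hc := abs_sin_le_one (t*x)
      rw [abs_mul, abs_neg, abs_mul]
      have ht3 : |t^3| ≤ 1 := by
        rw [abs_pow]
        calc |t|^3 ≤ 1^3 := pow_le_pow_left₀ (abs_nonneg t) he.2 3
          _ = 1 := one_pow 3
      have hE : |Real.exp ((t^2-1)/2)| ≤ 1 := by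
        rw [abs_of_pos (Real.exp_pos _)]; exact he.1
      nlinarith [abs_nonneg (t^3), abs_nonneg (Real.sin (t*x)), abs_nonneg (Real.exp ((t^2-1)/2)),
        mul_nonneg (abs_nonneg (t^3)) (abs_nonneg (Real.sin (t*x)))])
  linarith [this]

lemma gauss_sin : (∫ y, Real.sin y ∂(gaussianReal 0 1)) = 0 := by
  have hmap : (gaussianReal 0 1).map (fun x : ℝ => -x) = gaussianReal 0 1 := by
    have h := gaussianReal_map_const_mul (μ := 0) (v := 1) (-1)
    have h2 : ((-1 : ℝ) * ·) = (fun x : ℝ => -x) := by funext x; ring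
    rw [h2] at h
    rw [h]
    norm_num
  have h1 : ∫ y, Real.sin y ∂(gaussianReal 0 1) = ∫ y, Real.sin (-y) ∂(gaussianReal 0 1) := by
    conv_lhs => rw [← hmap]
    rw [MeasureTheory.integral_map measurable_neg.aemeasurable
      Real.continuous_sin.aestronglyMeasurable]
  simp only [Real.sin_neg, MeasureTheory.integral_neg] at h1
  linarith

/-- `∫ sin dγ = 0` for the standard Gaussian `γ`; `f_sin` is three times differentiable,
and its second and third derivatives are bounded by `2` everywhere. -/
theorem stmt_4 :
    (∫ y, Real.sin y ∂(gaussianReal 0 1)) = 0 ∧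
    Differentiable ℝ steinSolSin ∧
    Differentiable ℝ (deriv steinSolSin) ∧
    Differentiable ℝ (deriv (deriv steinSolSin)) ∧
    (∀ x : ℝ, |deriv (deriv steinSolSin) x| ≤ 2) ∧
    (∀ x : ℝ, |deriv (deriv (deriv steinSolSin)) x| ≤ 2) := by
  refine ⟨gauss_sin, fun x => (stein_hasDeriv x).differentiableAt,
    fun x => (stein_hasDeriv2 x).differentiableAt,
    fun x => (stein_hasDeriv3 x).differentiableAt, fun x => ?_, fun x => ?_⟩
  · rw [stein_deriv2]; exact bound2 x
  · rw [stein_deriv3]; exact bound3 x
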